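/- Let E be a normed vector space, λ > 0, α ∈ (0,1], and Y : [0,T] → E. Define the weighted norms (|Y|)_λ := sup_{t ∈ [0,T]} |Y_t| e^{−t/λ} and (|δY|)_{α;λ} := sup_{0 ≤ s < t ≤ T, |t−s| ≤ λ} |Y_t − Y_s| / (e^{t/λ} |t−s|^α). Then (|Y|)_λ ≤ |Y_0| + e² λ^α (|δY|)_{α;λ}. -/

import Mathlib

/-- Comparison of weighted norms: if `‖Y_t - Y_s‖ ≤ C e^{t/λ} (t-s)^α` for all
`0 ≤ s < t ≤ T` with `t - s ≤ λ`, then the weighted supremum norm of `Y` is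
bounded by `‖Y_0‖ + e² λ^α C`. -/
theorem stmt_2 {E : Type*} [NormedAddCommGroup E]
    (T lam α C : ℝ) (hlam : 0 < lam) (hα : 0 < α) (hα1 : α ≤ 1) (hC : 0 ≤ C)
    (Y : ℝ → E)
    (hHolder : ∀ s t, 0 ≤ s → s < t → t ≤ T → t - s ≤ lam →
      ‖Y t - Y s‖ ≤ C * Real.exp (t / lam) * (t - s) ^ α) :
    ∀ t, 0 ≤ t → t ≤ T →
      ‖Y t‖ * Real.exp (-(t / lam)) ≤ ‖Y 0‖ + Real.exp 2 * lam ^ α * C := by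
  have he1 : (1:ℝ) < Real.exp 1 := by
    have := Real.add_one_lt_exp (x := 1) one_ne_zero
    linarith
  have hem : (0:ℝ) < Real.exp 1 - 1 := by linarith
  have hlamα : (0:ℝ) ≤ lam ^ α := Real.rpow_nonneg hlam.le α
  -- key telescoping bound
  have key : ∀ n : ℕ, ∀ t, 0 < t → t ≤ T → t ≤ n * lam →
      ‖Y t - Y 0‖ ≤ C * lam ^ α * (Real.exp 1 / (Real.exp 1 - 1)) * Real.exp (t / lam) := by
    intro n
    induction n with
    | zero =>
      intro t ht _ hn
      simp at hn
      nlinarith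
    | succ n ih =>
      intro t ht hT hn
      by_cases h1 : t ≤ n * lam
      · exact ih t ht hT h1
      push_neg at h1
      by_cases h2 : t ≤ lam
      · -- one direct step from 0
        have h := hHolder 0 t le_rfl ht hT (by linarith)
        have htα : t ^ α ≤ lam ^ α := Real.rpow_le_rpow ht.le h2 hα.le
        have hexp : (0:ℝ) < Real.exp (t / lam) := Real.exp_pos _
        have hfac : (1:ℝ) ≤ Real.exp 1 / (Real.exp 1 - 1) := by
          rw [le_div_iff₀ hem]; linarith
        calc ‖Y t - Y 0‖ ≤ C * Real.exp (t / lam) * (t - 0) ^ α := h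
          _ = C * Real.exp (t / lam) * t ^ α := by ring_nf
          _ ≤ C * Real.exp (t / lam) * lam ^ α := by
              apply mul_le_mul_of_nonneg_left htα (by positivity)
          _ ≤ C * lam ^ α * (Real.exp 1 / (Real.exp 1 - 1)) * Real.exp (t / lam) := by
              nlinarith [mul_nonneg (mul_nonneg hC hlamα) hexp.le]
      push_neg at h2
      -- step from s = t - lam
      set s := t - lam with hs
      have hs0 : 0 < s := by simp [hs]; linarith
      have hsn : s ≤ n * lam := by
        have : t ≤ (n + 1) * lam := by push_cast at hn ⊢; linarith
        simp [hs]; linarith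
      have hih := ih s hs0 (by simp [hs]; linarith) hsn
      have hstep := hHolder s t hs0.le (by simp [hs]; linarith) hT (by simp [hs])
      have hts : t - s = lam := by simp [hs]
      rw [hts] at hstep
      have hexps : Real.exp (s / lam) = Real.exp (t / lam) / Real.exp 1 := by
        rw [← Real.exp_sub]
        congr 1
        field_simp [hs]
        exact hs
      have tri : ‖Y t - Y 0‖ ≤ ‖Y t - Y s‖ + ‖Y s - Y 0‖ := norm_sub_le_norm_sub_add_norm_sub _ _ _
      have heq : C * lam ^ α * (Real.exp 1 / (Real.exp 1 - 1)) * Real.exp (s / lam)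
          + C * Real.exp (t / lam) * lam ^ α
          = C * lam ^ α * (Real.exp 1 / (Real.exp 1 - 1)) * Real.exp (t / lam) := by
        rw [hexps]
        have he0 : Real.exp 1 ≠ 0 := (Real.exp_pos 1).ne'
        field_simp
        ring
      linarith
  intro t ht0 htT
  rcases eq_or_lt_of_le ht0 with h | h
  · subst h
    simp
    positivity
  · -- find n with t ≤ n * lam
    obtain ⟨n, hn⟩ := exists_nat_ge (t / lam)
    have htn : t ≤ n * lam := by
      rw [div_le_iff₀ hlam] at hn
      linarith
    have hkey := key n t h htT htn
    have hexpt : (0:ℝ) < Real.exp (t / lam) := Real.exp_pos _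
    have hexpneg : Real.exp (-(t / lam)) = (Real.exp (t / lam))⁻¹ := by
      rw [Real.exp_neg]
    have hYt : ‖Y t‖ ≤ ‖Y 0‖ + C * lam ^ α * (Real.exp 1 / (Real.exp 1 - 1)) * Real.exp (t / lam) := by
      have := norm_le_norm_add_norm_sub' (Y t) (Y 0)
      have h2 : ‖Y t - Y 0‖ = ‖Y t - Y 0‖ := rfl
      calc ‖Y t‖ ≤ ‖Y 0‖ + ‖Y t - Y 0‖ := by
            have := norm_sub_norm_le (Y t) (Y 0); linarith [abs_le.mp (abs_norm_sub_norm_le (Y t) (Y 0))]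
        _ ≤ _ := by linarith
    have hexple1 : Real.exp (-(t / lam)) ≤ 1 := by
      rw [Real.exp_le_one_iff]
      have : 0 < t / lam := div_pos h hlam
      linarith
    have hfac2 : Real.exp 1 / (Real.exp 1 - 1) ≤ Real.exp 2 := by
      rw [div_le_iff₀ hem]
      have h2 : Real.exp 2 = Real.exp 1 * Real.exp 1 := by
        rw [← Real.exp_add]; norm_num
      have h3 := Real.exp_one_gt_d9
      nlinarith
    calc ‖Y t‖ * Real.exp (-(t / lam))
        ≤ (‖Y 0‖ + C * lam ^ α * (Real.exp 1 / (Real.exp 1 - 1)) * Real.exp (t / lam)) * Real.exp (-(t / lam)) := by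
          apply mul_le_mul_of_nonneg_right hYt (Real.exp_pos _).le
      _ = ‖Y 0‖ * Real.exp (-(t / lam)) + C * lam ^ α * (Real.exp 1 / (Real.exp 1 - 1)) := by
          rw [hexpneg, add_mul, mul_assoc, mul_inv_cancel₀ hexpt.ne', mul_one]
      _ ≤ ‖Y 0‖ * 1 + C * lam ^ α * Real.exp 2 := by
          have h1 : ‖Y 0‖ * Real.exp (-(t / lam)) ≤ ‖Y 0‖ * 1 :=
            mul_le_mul_of_nonneg_left hexple1 (norm_nonneg _)
          have h2 : C * lam ^ α * (Real.exp 1 / (Real.exp 1 - 1)) ≤ C * lam ^ α * Real.exp 2 :=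
            mul_le_mul_of_nonneg_left hfac2 (mul_nonneg hC hlamα)
          linarith
      _ = ‖Y 0‖ + Real.exp 2 * lam ^ α * C := by ring
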